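/- For fixed H ∈ ℝ and fixed m ∈ (0,∞], the function ρ ↦ J_{H,ρ,m}(t) is pointwise monotone nonincreasing in ρ ∈ ℝ: if ρ₁ ≥ ρ₂ then J_{H,ρ₁,m}(t) ≤ J_{H,ρ₂,m}(t) for all t ∈ ℝ. -/

import Mathlib

open scoped Classical

noncomputable def sdel (δ t : ℝ) : ℝ :=
  if 0 < δ then Real.sin (Real.sqrt δ * t) / Real.sqrt δ
  else if δ = 0 then t
  else Real.sinh (Real.sqrt (-δ) * t) / Real.sqrt (-δ)

noncomputable def cdel (δ t : ℝ) : ℝ :=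
  if 0 < δ then Real.cos (Real.sqrt δ * t)
  else if δ = 0 then 1
  else Real.cosh (Real.sqrt (-δ) * t)

/-- Truncation `f₊` of `f` between its first nonpositive and first positive roots. -/
noncomputable def truncPos (f : ℝ → ℝ) (t : ℝ) : ℝ :=
  if ∃ s ∈ Set.Ioo (min t 0) (max t 0), f s = 0 then 0 else f t

/-- The model Jacobian `J_{H,ρ,m}` for `m ∈ (0,∞)`. -/
noncomputable def Jfun (H ρ m : ℝ) (t : ℝ) : ℝ :=
  (truncPos (fun s => cdel (ρ / m) s + (H / m) * sdel (ρ / m) s) t) ^ m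

lemma sdel_zero (δ : ℝ) : sdel δ 0 = 0 := by
  unfold sdel; split_ifs <;> simp

lemma cdel_zero (δ : ℝ) : cdel δ 0 = 1 := by
  unfold cdel; split_ifs <;> simp

lemma sdel_neg (δ t : ℝ) : sdel δ (-t) = -sdel δ t := by
  unfold sdel; split_ifs <;> simp [mul_neg, neg_div]

lemma cdel_neg (δ t : ℝ) : cdel δ (-t) = cdel δ t := by
  unfold cdel; split_ifs <;> simp [mul_neg]

lemma hasDerivAt_lin (a t : ℝ) : HasDerivAt (fun s : ℝ => a * s) a t := by
  simpa using (hasDerivAt_id t).const_mul a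

lemma hasDerivAt_sdel (δ t : ℝ) : HasDerivAt (sdel δ) (cdel δ t) t := by
  rcases lt_trichotomy 0 δ with hδ | hδ | hδ
  · have ha : Real.sqrt δ ≠ 0 := by positivity
    have h2 := ((Real.hasDerivAt_sin (Real.sqrt δ * t)).comp t
      (hasDerivAt_lin (Real.sqrt δ) t)).div_const (Real.sqrt δ)
    have h3 : Real.cos (Real.sqrt δ * t) * Real.sqrt δ / Real.sqrt δ
        = Real.cos (Real.sqrt δ * t) := by field_simp
    rw [h3] at h2
    have hs : sdel δ = fun s : ℝ => Real.sin (Real.sqrt δ * s) / Real.sqrt δ := by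
      funext s; simp [sdel, hδ]
    rw [hs, cdel, if_pos hδ]; exact h2
  · have hs : sdel δ = fun s : ℝ => s := by funext s; simp [sdel, ← hδ]
    have hc : cdel δ t = 1 := by simp [cdel, ← hδ]
    rw [hs, hc]; exact hasDerivAt_id t
  · have ha : Real.sqrt (-δ) ≠ 0 := ne_of_gt (Real.sqrt_pos.2 (by linarith))
    have h2 := ((Real.hasDerivAt_sinh (Real.sqrt (-δ) * t)).comp t
      (hasDerivAt_lin (Real.sqrt (-δ)) t)).div_const (Real.sqrt (-δ))
    have h3 : Real.cosh (Real.sqrt (-δ) * t) * Real.sqrt (-δ) / Real.sqrt (-δ)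
        = Real.cosh (Real.sqrt (-δ) * t) := mul_div_cancel_right₀ _ ha
    rw [h3] at h2
    have hs : sdel δ = fun s : ℝ => Real.sinh (Real.sqrt (-δ) * s) / Real.sqrt (-δ) := by
      funext s; simp [sdel, not_lt.2 hδ.le, hδ.ne]
    rw [hs, cdel, if_neg (not_lt.2 hδ.le), if_neg hδ.ne]; exact h2

lemma hasDerivAt_cdel (δ t : ℝ) : HasDerivAt (cdel δ) (-(δ * sdel δ t)) t := by
  rcases lt_trichotomy 0 δ with hδ | hδ | hδ
  · have ha : Real.sqrt δ ≠ 0 := by positivity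
    have h2 := (Real.hasDerivAt_cos (Real.sqrt δ * t)).comp t (hasDerivAt_lin (Real.sqrt δ) t)
    have h3 : -Real.sin (Real.sqrt δ * t) * Real.sqrt δ
        = -(δ * (Real.sin (Real.sqrt δ * t) / Real.sqrt δ)) := by
      field_simp
      linear_combination (-Real.sin (Real.sqrt δ * t)) * Real.sq_sqrt hδ.le
    rw [h3] at h2
    have hs : cdel δ = fun s : ℝ => Real.cos (Real.sqrt δ * s) := by
      funext s; simp [cdel, hδ]
    rw [hs, sdel, if_pos hδ]; exact h2
  · have hs : cdel δ = fun _ : ℝ => (1:ℝ) := by funext s; simp [cdel, ← hδ]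
    have hv : -(δ * sdel δ t) = 0 := by rw [← hδ]; ring
    rw [hs, hv]
    exact hasDerivAt_const t (1:ℝ)
  · have ha : Real.sqrt (-δ) ≠ 0 := ne_of_gt (Real.sqrt_pos.2 (by linarith))
    have h2 := (Real.hasDerivAt_cosh (Real.sqrt (-δ) * t)).comp t
      (hasDerivAt_lin (Real.sqrt (-δ)) t)
    have h3 : Real.sinh (Real.sqrt (-δ) * t) * Real.sqrt (-δ)
        = -(δ * (Real.sinh (Real.sqrt (-δ) * t) / Real.sqrt (-δ))) := by
      have hsq : Real.sqrt (-δ) * Real.sqrt (-δ) = -δ := Real.mul_self_sqrt (by linarith)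
      field_simp
      linear_combination Real.sinh (Real.sqrt (-δ) * t) * hsq
    rw [h3] at h2
    have hs : cdel δ = fun s : ℝ => Real.cosh (Real.sqrt (-δ) * s) := by
      funext s; simp [cdel, not_lt.2 hδ.le, hδ.ne]
    rw [hs, sdel, if_neg (not_lt.2 hδ.le), if_neg hδ.ne]; exact h2

noncomputable def gd (δ h s : ℝ) : ℝ := cdel δ s + h * sdel δ s
noncomputable def gd' (δ h s : ℝ) : ℝ := h * cdel δ s - δ * sdel δ s

lemma gd_zero (δ h : ℝ) : gd δ h 0 = 1 := by simp [gd, sdel_zero, cdel_zero]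
lemma gd'_zero (δ h : ℝ) : gd' δ h 0 = h := by simp [gd', sdel_zero, cdel_zero]

lemma hasDerivAt_gd (δ h t : ℝ) : HasDerivAt (gd δ h) (gd' δ h t) t := by
  have := (hasDerivAt_cdel δ t).add ((hasDerivAt_sdel δ t).const_mul h)
  refine this.congr_deriv ?_
  unfold gd'; ring

lemma hasDerivAt_gd' (δ h t : ℝ) : HasDerivAt (gd' δ h) (-(δ * gd δ h t)) t := by
  have := ((hasDerivAt_cdel δ t).const_mul h).sub ((hasDerivAt_sdel δ t).const_mul δ)
  refine this.congr_deriv ?_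
  unfold gd; ring

lemma cont_gd (δ h : ℝ) : Continuous (gd δ h) :=
  continuous_iff_continuousAt.2 fun x => (hasDerivAt_gd δ h x).continuousAt

lemma cont_gd' (δ h : ℝ) : Continuous (gd' δ h) :=
  continuous_iff_continuousAt.2 fun x => (hasDerivAt_gd' δ h x).continuousAt

/-- Wronskian argument: if `g₂ > 0` and `g₁ > 0` on `[0,z]`, then `g₁ ≤ g₂` on `[0,z]`. -/
lemma wronskian_step (δ₁ δ₂ h z : ℝ) (hδ : δ₂ ≤ δ₁) (hz : 0 ≤ z)
    (h1 : ∀ r ∈ Set.Icc 0 z, 0 < gd δ₁ h r) (h2 : ∀ r ∈ Set.Icc 0 z, 0 < gd δ₂ h r) :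
    ∀ r ∈ Set.Icc 0 z, gd δ₁ h r ≤ gd δ₂ h r := by
  set W : ℝ → ℝ := fun s => gd' δ₂ h s * gd δ₁ h s - gd' δ₁ h s * gd δ₂ h s with hW
  have hdW : ∀ s, HasDerivAt W ((δ₁ - δ₂) * (gd δ₁ h s * gd δ₂ h s)) s := by
    intro s
    have := ((hasDerivAt_gd' δ₂ h s).mul (hasDerivAt_gd δ₁ h s)).sub
      ((hasDerivAt_gd' δ₁ h s).mul (hasDerivAt_gd δ₂ h s))
    refine this.congr_deriv ?_
    ring
  have hWmono : MonotoneOn W (Set.Icc 0 z) := by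
    apply monotoneOn_of_deriv_nonneg (convex_Icc 0 z)
      (Continuous.continuousOn (((cont_gd' δ₂ h).mul (cont_gd δ₁ h)).sub
        ((cont_gd' δ₁ h).mul (cont_gd δ₂ h))))
      (fun x _ => (hdW x).differentiableAt.differentiableWithinAt)
    intro x hx
    rw [interior_Icc] at hx
    change 0 ≤ deriv W x
    rw [(hdW x).deriv]
    have hx' : x ∈ Set.Icc 0 z := Set.Ioo_subset_Icc_self hx
    have ha := h1 x hx'
    have hb := h2 x hx'
    nlinarith [mul_pos ha hb]
  have hW0 : W 0 = 0 := by simp [hW, gd_zero, gd'_zero]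
  have hWnn : ∀ r ∈ Set.Icc 0 z, 0 ≤ W r := by
    intro r hr
    have := hWmono (Set.left_mem_Icc.2 hz) hr hr.1
    rw [hW0] at this; exact this
  -- ratio q = g₂/g₁ is monotone on [0,z]
  set q : ℝ → ℝ := fun s => gd δ₂ h s / gd δ₁ h s with hq
  have hdq : ∀ r ∈ Set.Icc 0 z, HasDerivAt q (W r / (gd δ₁ h r) ^ 2) r := by
    intro r hr
    have := (hasDerivAt_gd δ₂ h r).div (hasDerivAt_gd δ₁ h r) (ne_of_gt (h1 r hr))
    refine this.congr_deriv ?_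
    rw [hW]; ring
  have hqmono : MonotoneOn q (Set.Icc 0 z) := by
    apply monotoneOn_of_deriv_nonneg (convex_Icc 0 z)
    · intro r hr
      exact ((hdq r hr).continuousAt).continuousWithinAt
    · intro r hr
      rw [interior_Icc] at hr
      exact ((hdq r (Set.Ioo_subset_Icc_self hr)).differentiableAt).differentiableWithinAt
    · intro r hr
      rw [interior_Icc] at hr
      have hr' := Set.Ioo_subset_Icc_self hr
      rw [(hdq r hr').deriv]
      exact div_nonneg (hWnn r hr') (sq_nonneg _)
  have hq0 : q 0 = 1 := by simp [hq, gd_zero]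
  intro r hr
  have h1r := h1 r hr
  have : (1:ℝ) ≤ q r := by
    rw [← hq0]
    exact hqmono (Set.left_mem_Icc.2 hz) hr hr.1
  rw [hq] at this
  exact (one_le_div h1r).1 this

/-- Core comparison: before the first zero of `g₁`, we have `g₁ ≤ g₂`. -/
lemma core (δ₁ δ₂ h t : ℝ) (hδ : δ₂ ≤ δ₁) (ht : 0 ≤ t)
    (hpos : ∀ s ∈ Set.Ioo 0 t, 0 < gd δ₁ h s) :
    gd δ₁ h t ≤ gd δ₂ h t := by
  rcases eq_or_lt_of_le ht with h0 | h0
  · rw [← h0, gd_zero, gd_zero]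
  -- enough to prove it on [0, T] for each T < t, then take limits
  have key : ∀ T, 0 ≤ T → T < t → ∀ r ∈ Set.Icc 0 T, gd δ₁ h r ≤ gd δ₂ h r := by
    intro T hT0 hTt
    set s : Set ℝ := {y | ∀ r ∈ Set.Icc 0 y, gd δ₁ h r ≤ gd δ₂ h r} with hsdef
    have h1pos : ∀ r, 0 ≤ r → r < t → 0 < gd δ₁ h r := by
      intro r hr0 hrt
      rcases eq_or_lt_of_le hr0 with h' | h'
      · rw [← h', gd_zero]; norm_num
      · exact hpos r ⟨h', hrt⟩
    have hclosed : IsClosed (s ∩ Set.Icc 0 T) := by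
      have : s ∩ Set.Icc 0 T = Set.Icc 0 T ∩
          ⋂ r ∈ Set.Icc (0:ℝ) T, {y | gd δ₁ h (min r y) ≤ gd δ₂ h (min r y)} := by
        ext y
        constructor
        · rintro ⟨hys, hyI⟩
          refine ⟨hyI, ?_⟩
          simp only [Set.mem_iInter, Set.mem_setOf_eq]
          intro r hr
          exact hys (min r y) ⟨le_min hr.1 hyI.1, min_le_right _ _⟩
        · rintro ⟨hyI, hmem⟩
          simp only [Set.mem_iInter, Set.mem_setOf_eq] at hmem
          refine ⟨?_, hyI⟩
          intro r hr
          have hr' : r ∈ Set.Icc (0:ℝ) T := ⟨hr.1, le_trans hr.2 hyI.2⟩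
          have := hmem r hr'
          rwa [min_eq_left hr.2] at this
      rw [this]
      refine IsClosed.inter isClosed_Icc (isClosed_biInter fun r _ => ?_)
      exact isClosed_le ((cont_gd δ₁ h).comp (continuous_const.min continuous_id))
        ((cont_gd δ₂ h).comp (continuous_const.min continuous_id))
    have h0s : (0:ℝ) ∈ s := by
      intro r hr
      rcases hr with ⟨hr1, hr2⟩
      have : r = 0 := le_antisymm hr2 hr1
      rw [this, gd_zero, gd_zero]
    have hstep : ∀ x ∈ s ∩ Set.Ico 0 T, ∀ y ∈ Set.Ioi x, (s ∩ Set.Ioc x y).Nonempty := by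
      rintro x ⟨hxs, hx0, hxT⟩ y hy
      -- g₂ is positive on [0, x]
      have h2posx : ∀ r ∈ Set.Icc 0 x, 0 < gd δ₂ h r := fun r hr =>
        lt_of_lt_of_le (h1pos r hr.1 (lt_of_le_of_lt (le_trans hr.2 hxT.le) hTt)) (hxs r hr)
      -- g₂ positive slightly beyond x
      have hcx : Filter.Tendsto (gd δ₂ h) (nhds x) (nhds (gd δ₂ h x)) :=
        (cont_gd δ₂ h).continuousAt
      have hevent : ∀ᶠ r in nhds x, 0 < gd δ₂ h r :=
        hcx.eventually (eventually_gt_nhds (h2posx x ⟨hx0, le_refl x⟩))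
      obtain ⟨ε, hε, hball⟩ := Metric.eventually_nhds_iff.1 hevent
      set z : ℝ := min y (min T (x + ε / 2)) with hzdef
      have hzx : x < z := by
        apply lt_min hy
        exact lt_min hxT (by linarith)
      have hzy : z ≤ y := min_le_left _ _
      have hzT : z ≤ T := le_trans (min_le_right _ _) (min_le_left _ _)
      have hzxe : z ≤ x + ε / 2 := le_trans (min_le_right _ _) (min_le_right _ _)
      have hz0 : 0 ≤ z := le_trans hx0 hzx.le
      -- g₁ positive on [0, z]
      have h1z : ∀ r ∈ Set.Icc 0 z, 0 < gd δ₁ h r := fun r hr =>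
        h1pos r hr.1 (lt_of_le_of_lt (le_trans hr.2 hzT) hTt)
      -- g₂ positive on [0, z]
      have h2z : ∀ r ∈ Set.Icc 0 z, 0 < gd δ₂ h r := by
        intro r hr
        rcases le_or_gt r x with hrx | hrx
        · exact h2posx r ⟨hr.1, hrx⟩
        · apply hball
          rw [Real.dist_eq, abs_of_nonneg (by linarith)]
          have : r ≤ x + ε / 2 := le_trans hr.2 hzxe
          linarith
      exact ⟨z, wronskian_step δ₁ δ₂ h z hδ hz0 h1z h2z, hzx, hzy⟩
    have := hclosed.Icc_subset_of_forall_exists_gt h0s hstep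
    intro r hr
    exact this (Set.mem_Icc.2 ⟨hr.1, hr.2⟩) r ⟨hr.1, le_refl r⟩
  -- pass to the limit at t
  have hcl : t ∈ closure (Set.Ico 0 t) := by
    rw [closure_Ico (ne_of_lt h0)]
    exact ⟨ht, le_refl t⟩
  have hsub : Set.Ico 0 t ⊆ {r | gd δ₁ h r ≤ gd δ₂ h r} := by
    intro r hr
    exact key r hr.1 hr.2 r ⟨hr.1, le_refl r⟩
  have hclosed : IsClosed {r | gd δ₁ h r ≤ gd δ₂ h r} :=
    isClosed_le (cont_gd δ₁ h) (cont_gd δ₂ h)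
  exact (hclosed.closure_subset_iff.2 hsub) hcl

/-- If `g₁` has no zero in `(0,t)`, it is positive there. -/
lemma gd_pos_of_no_zero (δ h t : ℝ) (ht : 0 ≤ t)
    (hnz : ¬ ∃ s ∈ Set.Ioo (0:ℝ) t, gd δ h s = 0) :
    ∀ s ∈ Set.Ioo (0:ℝ) t, 0 < gd δ h s := by
  intro s hs
  by_contra hle
  push_neg at hle
  rcases eq_or_lt_of_le hle with h' | h'
  · exact hnz ⟨s, hs, h'⟩
  · have hc : ContinuousOn (gd δ h) (Set.Icc 0 s) := (cont_gd δ h).continuousOn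
    have : (0:ℝ) ∈ Set.Ioo (gd δ h s) (gd δ h 0) := by
      rw [gd_zero]; exact ⟨h', one_pos⟩
    obtain ⟨r, hr, hr0⟩ := intermediate_value_Ioo' hs.1.le hc this
    exact hnz ⟨r, ⟨hr.1, lt_trans hr.2 hs.2⟩, hr0⟩

lemma gd_trunc_nonneg (δ h t : ℝ) (ht : 0 ≤ t) : 0 ≤ truncPos (gd δ h) t := by
  unfold truncPos
  rw [min_eq_right ht, max_eq_left ht]
  split_ifs with hex
  · exact le_refl 0
  · by_contra hlt
    push_neg at hlt
    have hc : ContinuousOn (gd δ h) (Set.Icc 0 t) := (cont_gd δ h).continuousOn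
    have : (0:ℝ) ∈ Set.Ioo (gd δ h t) (gd δ h 0) := by
      rw [gd_zero]; exact ⟨hlt, one_pos⟩
    obtain ⟨r, hr, hr0⟩ := intermediate_value_Ioo' ht hc this
    exact hex ⟨r, hr, hr0⟩

lemma gd_trunc_le (δ₁ δ₂ h t : ℝ) (hδ : δ₂ ≤ δ₁) (ht : 0 ≤ t) :
    truncPos (gd δ₁ h) t ≤ truncPos (gd δ₂ h) t := by
  by_cases hex1 : ∃ s ∈ Set.Ioo (min t 0) (max t 0), gd δ₁ h s = 0
  · rw [truncPos, if_pos hex1]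
    exact gd_trunc_nonneg δ₂ h t ht
  · rw [truncPos, if_neg hex1]
    rw [min_eq_right ht, max_eq_left ht] at hex1
    have hpos := gd_pos_of_no_zero δ₁ h t ht hex1
    have hle := core δ₁ δ₂ h t hδ ht hpos
    by_cases hex2 : ∃ s ∈ Set.Ioo (min t 0) (max t 0), gd δ₂ h s = 0
    · exfalso
      rw [min_eq_right ht, max_eq_left ht] at hex2
      obtain ⟨s, hs, hs0⟩ := hex2
      have := core δ₁ δ₂ h s hδ hs.1.le
        (fun r hr => hpos r ⟨hr.1, lt_trans hr.2 hs.2⟩)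
      rw [hs0] at this
      exact absurd this (not_le.2 (hpos s hs))
    · rw [truncPos, if_neg hex2]
      exact hle

lemma trunc_reflect (δ h t : ℝ) :
    truncPos (gd δ h) t = truncPos (gd δ (-h)) (-t) := by
  have hval : ∀ s : ℝ, gd δ h s = gd δ (-h) (-s) := by
    intro s; simp [gd, sdel_neg, cdel_neg]
  have hmin : min (-t) 0 = -(max t 0) := by
    rcases le_total 0 t with h' | h'
    · rw [max_eq_left h', min_eq_left (by linarith)]
    · rw [max_eq_right h', min_eq_right (by linarith), neg_zero]
  have hmax : max (-t) 0 = -(min t 0) := by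
    rcases le_total 0 t with h' | h'
    · rw [min_eq_right h', max_eq_right (by linarith), neg_zero]
    · rw [min_eq_left h', max_eq_left (by linarith)]
  unfold truncPos
  rw [hmin, hmax]
  have hiff : (∃ s ∈ Set.Ioo (min t 0) (max t 0), gd δ h s = 0) ↔
      (∃ s ∈ Set.Ioo (-(max t 0)) (-(min t 0)), gd δ (-h) s = 0) := by
    constructor
    · rintro ⟨s, hs, hs0⟩
      exact ⟨-s, ⟨by linarith [hs.2], by linarith [hs.1]⟩, by rw [← hval]; exact hs0⟩
    · rintro ⟨s, hs, hs0⟩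
      refine ⟨-s, ⟨by linarith [hs.2], by linarith [hs.1]⟩, ?_⟩
      rw [hval]; simpa using hs0
  exact if_congr hiff rfl (hval t)

/-- `ρ ↦ J_{H,ρ,m}` is pointwise nonincreasing in `ρ`, for `m ∈ (0,∞)` as
well as for `m = ∞` (where `J_{H,ρ,∞}(t) = exp(Ht − (ρ/2)t²)`). -/
theorem stmt3 (H m ρ₁ ρ₂ : ℝ) (hm : 0 < m) (hρ : ρ₂ ≤ ρ₁) (t : ℝ) :
    Jfun H ρ₁ m t ≤ Jfun H ρ₂ m t ∧
    Real.exp (H * t - ρ₁ / 2 * t ^ 2) ≤ Real.exp (H * t - ρ₂ / 2 * t ^ 2) := by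
  constructor
  · have hδ : ρ₂ / m ≤ ρ₁ / m := by gcongr
    show (truncPos (gd (ρ₁ / m) (H / m)) t) ^ m ≤ (truncPos (gd (ρ₂ / m) (H / m)) t) ^ m
    rcases le_or_gt 0 t with ht | ht
    · exact Real.rpow_le_rpow (gd_trunc_nonneg _ _ t ht) (gd_trunc_le _ _ _ t hδ ht) hm.le
    · rw [trunc_reflect (ρ₁ / m) (H / m) t, trunc_reflect (ρ₂ / m) (H / m) t]
      exact Real.rpow_le_rpow (gd_trunc_nonneg _ _ _ (by linarith))
        (gd_trunc_le _ _ _ _ hδ (by linarith)) hm.le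
  · apply Real.exp_le_exp.2
    nlinarith [sq_nonneg t]
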